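/- Let r be a square root on a pseudo MV-algebra M = Γ(G,u) such that the supremum a = ⋁_{n∈ℕ, n≥1} rⁿ(0) of the iterates of r at 0 exists in M. Then a ⊕ a = a, and every x ∈ M with a ≤ x satisfies x ⊕ x = x; consequently the interval pseudo MV-algebra [a,1] (with x ⊕_a y = x ⊕ y, x^{−a} = x⁻ ∨ a, x^{~a} = x~ ∨ a, bottom a and top 1) is a Boolean algebra. -/

import Mathlib

section Core

variable {G : Type} [Lattice G] [AddGroup G]

/-- `u` is a strong unit of the ℓ-group `G`. -/
def IsStrongUnit (u : G) : Prop :=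
  0 ≤ u ∧ ∀ g : G, ∃ n : ℕ, 1 ≤ n ∧ g ≤ n • u

/-- Truncated addition `x ⊕ y = (x + y) ⊓ u` of the pseudo MV-algebra `Γ(G,u)`. -/
def oplus (u x y : G) : G := (x + y) ⊓ u

/-- Left negation `x⁻ = u - x`. -/
def negl (u x : G) : G := u - x

/-- Right negation `x~ = -x + u`. -/
def negr (u x : G) : G := -x + u

/-- `x ⊙ y = (x - u + y) ⊔ 0`. -/
def odot (u x y : G) : G := (x - u + y) ⊔ 0

/-- `r` is a square root on the pseudo MV-algebra `M = Γ(G,u)`: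
it maps `M` to `M` and satisfies (Sq1), (Sq2), (Sq3). -/
def IsSquareRoot (u : G) (r : G → G) : Prop :=
  (∀ x, 0 ≤ x → x ≤ u → 0 ≤ r x ∧ r x ≤ u) ∧
  (∀ x, 0 ≤ x → x ≤ u → odot u (r x) (r x) = x) ∧
  (∀ x y, 0 ≤ x → x ≤ u → 0 ≤ y → y ≤ u → odot u y y ≤ x → y ≤ r x) ∧
  (∀ x, 0 ≤ x → x ≤ u → r (negl u x) = oplus u (negl u (r x)) (r 0)) ∧
  (∀ x, 0 ≤ x → x ≤ u → r (negr u x) = oplus u (r 0) (negr u (r x)))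

/-- `r` is strict: `r 0 = r 0⁻`. -/
def IsStrict (u : G) (r : G → G) : Prop := r 0 = negl u (r 0)

end Core

/-- An additive structure is two-divisible if every element is `h + h` for some `h`. -/
def TwoDivisible (A : Type) [Add A] : Prop := ∀ g : A, ∃ h : A, h + h = g

/-- `m` is the infimum of `S` computed inside the interval `M = [0,u]`. -/
def IsInfIn {G : Type} [Lattice G] [AddGroup G] (u : G) (S : Set G) (m : G) : Prop :=
  (0 ≤ m ∧ m ≤ u) ∧ (∀ s ∈ S, m ≤ s) ∧
  ∀ x : G, 0 ≤ x → x ≤ u → (∀ s ∈ S, x ≤ s) → x ≤ m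

/-- `m` is the supremum of `S` computed inside the interval `M = [0,u]`. -/
def IsSupIn {G : Type} [Lattice G] [AddGroup G] (u : G) (S : Set G) (m : G) : Prop :=
  (0 ≤ m ∧ m ≤ u) ∧ (∀ s ∈ S, s ≤ m) ∧
  ∀ x : G, 0 ≤ x → x ≤ u → (∀ s ∈ S, s ≤ x) → m ≤ x

/-- if `a = ⋁_{n ≥ 1} rⁿ(0)` exists in `M`, then `a` is Boolean and every
`x ∈ [a,1]` is Boolean, i.e. the interval pseudo MV-algebra `[a,1]` is a Boolean
algebra. -/
theorem stmt_14 {G : Type} [Lattice G] [AddGroup G]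
    [CovariantClass G G (· + ·) (· ≤ ·)]
    [CovariantClass G G (Function.swap (· + ·)) (· ≤ ·)]
    (u : G) (hu : IsStrongUnit u) (r : G → G) (hr : IsSquareRoot u r)
    (a : G) (ha : IsSupIn u {x : G | ∃ n : ℕ, 1 ≤ n ∧ x = r^[n] 0} a) :
    oplus u a a = a ∧ ∀ x : G, a ≤ x → x ≤ u → oplus u x x = x := by
  obtain ⟨⟨ha0, hau⟩, haub, halub⟩ := ha
  obtain ⟨hmap, hsq1, hsq2, -, -⟩ := hr
  -- iterates stay in [0,u]
  have hiter : ∀ n : ℕ, 0 ≤ r^[n] 0 ∧ r^[n] 0 ≤ u := by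
    intro n
    induction n with
    | zero => exact ⟨le_rfl, hu.1⟩
    | succ n ih =>
      rw [Function.iterate_succ_apply']
      exact hmap _ ih.1 ih.2
  have hmem : ∀ n : ℕ, 1 ≤ n → r^[n] 0 ≤ a := fun n hn => haub _ ⟨n, hn, rfl⟩
  have hr0a : r 0 ≤ a := by
    have := hmem 1 le_rfl
    simpa using this
  set b := a ⊓ (-a + u) with hbdef
  have hba : b ≤ a := inf_le_left
  have hb2 : b ≤ -a + u := inf_le_right
  have hb0 : 0 ≤ b := by
    refine le_inf ha0 ?_
    have : -a + a ≤ -a + u := add_le_add_right hau _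
    simpa using this
  have hab : a + b ≤ u := by
    have := add_le_add_left hb2 a
    simpa using this
  -- key: rⁿ0 + b ≤ a for n ≥ 1
  have hkey : ∀ n : ℕ, 1 ≤ n → r^[n] 0 + b ≤ a := by
    intro n hn
    set y := r^[n+1] 0 with hy
    have hyval : y = r (r^[n] 0) := by rw [hy, Function.iterate_succ_apply']
    have hsq : odot u y y = r^[n] 0 := by
      rw [hyval]; exact hsq1 _ (hiter n).1 (hiter n).2
    have hya : y ≤ a := hmem (n+1) (by omega)
    have hyb : y + b ≤ u := le_trans (add_le_add_left hya b) hab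
    have h1 : y - u + y + b ≤ a := by
      have : (y - u) + (y + b) ≤ (y - u) + u := add_le_add_right hyb _
      calc y - u + y + b = (y - u) + (y + b) := by rw [add_assoc]
        _ ≤ (y - u) + u := this
        _ = y := by simp [sub_eq_add_neg, add_assoc]
        _ ≤ a := hya
    calc r^[n] 0 + b = ((y - u + y) ⊔ 0) + b := by rw [← hsq]; rfl
      _ = (y - u + y + b) ⊔ (0 + b) := sup_add (y - u + y) 0 b
      _ ≤ a := by
          refine sup_le h1 ?_
          simpa using hba
  -- conclude b ≤ 0
  have hble : b ≤ 0 := by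
    have hub : ∀ s ∈ {x : G | ∃ n : ℕ, 1 ≤ n ∧ x = r^[n] 0}, s ≤ a - b := by
      rintro s ⟨n, hn, rfl⟩
      have := hkey n hn
      have h2 : r^[n] 0 + b + -b ≤ a + -b := add_le_add_left this _
      simpa [add_assoc, sub_eq_add_neg] using h2
    have h0ab : 0 ≤ a - b := by
      have : b + -b ≤ a + -b := add_le_add_left hba _
      simpa [sub_eq_add_neg] using this
    have habu : a - b ≤ u := by
      have hnb : -b ≤ 0 := by
        have := add_le_add_right hb0 (-b)
        simpa using this
      have : a + -b ≤ a + 0 := add_le_add_right hnb a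
      simpa [sub_eq_add_neg] using this.trans (by simpa using hau)
    have := halub (a - b) h0ab habu hub
    -- a ≤ a - b implies b ≤ 0
    have h3 : a + b ≤ a - b + b := add_le_add_left this b
    have h4 : a + b ≤ a := by simpa [sub_eq_add_neg, add_assoc] using h3
    have h5 : -a + (a + b) ≤ -a + a := add_le_add_right h4 _
    simpa using h5
  -- general Boolean-ness for x ∈ [a,u]
  have hmain : ∀ x : G, a ≤ x → x ≤ u → oplus u x x = x := by
    intro x hax hxu
    have hx0 : 0 ≤ x := le_trans ha0 hax
    set c := x ⊓ (-x + u) with hcdef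
    have hcx : c ≤ x := inf_le_left
    have hc2 : c ≤ -x + u := inf_le_right
    have hc0 : 0 ≤ c := by
      refine le_inf hx0 ?_
      have : -x + x ≤ -x + u := add_le_add_right hxu _
      simpa using this
    -- c ⊙ c = 0
    have hcc : odot u c c ≤ 0 := by
      have h1 : c - u ≤ -x := by
        have := add_le_add_right hc2 (-u)
        simpa [sub_eq_add_neg, add_assoc] using this
      have h2 : c - u + c ≤ -x + x := by
        calc c - u + c ≤ -x + c := add_le_add_left h1 c
          _ ≤ -x + x := add_le_add_right hcx _
      refine sup_le ?_ le_rfl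
      simpa using h2
    have hcr0 : c ≤ r 0 :=
      hsq2 0 c le_rfl hu.1 hc0 (hcx.trans hxu) hcc
    have hcb : c ≤ b := by
      refine le_inf (hcr0.trans hr0a) ?_
      have hnx : -x ≤ -a := by
        have h1 : a + -x ≤ x + -x := add_le_add_left hax (-x)
        have h2 : -a + (a + -x) ≤ -a + (x + -x) := add_le_add_right (by simpa using h1) _
        simpa using h2
      have : -x + u ≤ -a + u := add_le_add_left hnx u
      exact hc2.trans this
    have hcle : c ≤ 0 := hcb.trans hble
    -- (x + x) ⊓ u = x + c ≤ x, and ≥ x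
    have hdist : x + c = (x + x) ⊓ u := by
      rw [hcdef, add_inf]
      congr 1
      simp [add_assoc]
    have hle : oplus u x x ≤ x := by
      rw [oplus, ← hdist]
      have := add_le_add_left hcle x
      simpa using this
    have hge : x ≤ oplus u x x := by
      refine le_inf ?_ hxu
      simpa using add_le_add_left hx0 x
    exact le_antisymm hle hge
  exact ⟨hmain a le_rfl hau, hmain⟩
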